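/- Apply the layered spin-configuration setup to the graph H = G'. Take mixer angles β_ℓ = ψ for 1 ≤ ℓ ≤ p−2 and β_{p−1} = β_p = π/4, where ψ is an arbitrary real number. For an edge {a,b} of G' and an integer k define the Laurent coefficient w_{(a,b)}(k) = Σ_{z : D(z)=k} z_a^[0] · z_b^[0] · Π_{x∈V(G')} f(z_x), the sum ranging over all layered spin configurations z on V(G') with exponent k. Then for every edge {a,b} of G' with {a,b} ≠ {x_0,y_0} and every integer k ≥ (p−1)·MAXCUT(G') + 200n0² + 2n0(11n0+1), one has w_{(a,b)}(k) = 0. -/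

import Mathlib

/-!
STATEMENT 4: vanishing of high-degree Laurent coefficients for observables on
edges other than {x₀, y₀}. For every edge {a,b} of G′ with {a,b} ≠ {x₀,y₀} and
every k ≥ (p-1)·MAXCUT(G′) + 200 n₀² + 2 n₀(11 n₀ + 1), the coefficient
w_{(a,b)}(k) = Σ_{D(z)=k} z_a^{[0]} z_b^{[0]} ∏_x f(z_x) is zero. Mixer angles:
β_ℓ = ψ (1 ≤ ℓ ≤ p-2), β_{p-1} = β_p = π/4, with ψ arbitrary.
-/
noncomputable section

namespace QAOA

/-- Vertex type of the graph `G'` built from a graph on vertex type `V` of size `n0`: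
gadget vertices `L u i` (`i < n0+1`), `R u i` (`i < 10 n0`), frame vertices
`X i`, `Y i` (`i < 100 n0²`), and the controller `W`. -/
inductive GPV (V : Type) (n0 : ℕ) : Type where
  | L : V → Fin (n0 + 1) → GPV V n0
  | R : V → Fin (10 * n0) → GPV V n0
  | X : Fin (100 * n0 * n0) → GPV V n0
  | Y : Fin (100 * n0 * n0) → GPV V n0
  | W : GPV V n0
  deriving DecidableEq, Fintype

/-- Base relation (one orientation per edge) describing the edges of `G'`. -/
def gpRel {V : Type} [DecidableEq V] (n0 : ℕ) (G : SimpleGraph V) [DecidableRel G.Adj] :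
    GPV V n0 → GPV V n0 → Bool
  | .L u _, .R v _ => u == v
  | .L u i, .L v j => decide (G.Adj u v) && ((i : ℕ) == (j : ℕ))
  | .X _, .Y _ => true
  | .X i, .L _ _ => (i : ℕ) == 0
  | .X i, .R _ _ => (i : ℕ) == 0
  | .Y i, .L _ _ => (i : ℕ) == 0
  | .Y i, .R _ _ => (i : ℕ) == 0
  | .W, .X i => (i : ℕ) == 0
  | .W, .Y i => (i : ℕ) == 0
  | .W, .L _ i => (i : ℕ) == 0
  | _, _ => false

/-- The graph `G'` obtained from `G` by the four-step construction. -/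
def Gp {V : Type} [DecidableEq V] (n0 : ℕ) (G : SimpleGraph V) [DecidableRel G.Adj] :
    SimpleGraph (GPV V n0) :=
  SimpleGraph.fromRel (fun a b => gpRel n0 G a b = true)

instance {V : Type} [DecidableEq V] (n0 : ℕ) (G : SimpleGraph V) [DecidableRel G.Adj] :
    DecidableRel (Gp n0 G).Adj := fun a b =>
  decidable_of_iff _ (SimpleGraph.fromRel_adj (fun a b => gpRel n0 G a b = true) a b).symm

/-- The special frame vertex `x₀`. -/
def xzero (V : Type) (n0 : ℕ) (h : 0 < n0) : GPV V n0 :=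
  GPV.X ⟨0, Nat.mul_pos (Nat.mul_pos (by norm_num) h) h⟩

/-- The special frame vertex `y₀`. -/
def yzero (V : Type) (n0 : ℕ) (h : 0 < n0) : GPV V n0 :=
  GPV.Y ⟨0, Nat.mul_pos (Nat.mul_pos (by norm_num) h) h⟩

/-- `cutSet H S` is the number of edges of `H` with exactly one endpoint in `S`. -/
def cutSet {W : Type} [Fintype W] [DecidableEq W] (H : SimpleGraph W) [DecidableRel H.Adj]
    (S : Finset W) : ℕ :=
  (Finset.univ.filter (fun pr : W × W => H.Adj pr.1 pr.2 ∧ pr.1 ∈ S ∧ pr.2 ∉ S)).card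

/-- `maxCut H` is the maximum of `cutSet H S` over all vertex subsets `S`. -/
def maxCut {W : Type} [Fintype W] [DecidableEq W] (H : SimpleGraph W) [DecidableRel H.Adj] : ℕ :=
  (Finset.univ : Finset (Finset W)).sup (fun S => cutSet H S)

end QAOA
namespace QAOA

/-- Map a layer index `j ∈ {-p,…,p}` to an index in `Fin (2p+1)` (via `j ↦ j + p`). -/
def lay (p : ℕ) (j : ℤ) : Fin (2 * p + 1) :=
  ⟨(j + p).toNat % (2 * p + 1), Nat.mod_lt _ (by omega)⟩

/-- One-qubit mixer matrix element `m(β; a, b)`: `cos β` if `a = b`, `i sin β` otherwise. -/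
noncomputable def mElem (β : ℝ) (a b : ℤˣ) : ℂ :=
  if a = b then (Real.cos β : ℂ) else Complex.I * (Real.sin β : ℂ)

/-- Conjugated mixer matrix element `m̄(β; a, b)`: `cos β` if `a = b`, `-i sin β` otherwise. -/
noncomputable def mElemBar (β : ℝ) (a b : ℤˣ) : ℂ :=
  if a = b then (Real.cos β : ℂ) else -(Complex.I * (Real.sin β : ℂ))

/-- The one-site kernel `f(z_x)` of a vertex, given its layered spins
`zx : Fin (2p+1) → ℤˣ` and the mixer angles `β`. -/
noncomputable def kernel (p : ℕ) (β : ℕ → ℝ) (zx : Fin (2 * p + 1) → ℤˣ) : ℂ :=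
  (1 / 2 : ℂ)
    * (∏ ℓ ∈ Finset.Icc 1 (p - 1), mElem (β ℓ) (zx (lay p ℓ)) (zx (lay p (ℓ + 1))))
    * mElem (β p) (zx (lay p p)) (zx (lay p 0))
    * mElemBar (β p) (zx (lay p 0)) (zx (lay p (-(p : ℤ))))
    * (∏ ℓ ∈ Finset.Icc 1 (p - 1),
        mElemBar (β ℓ) (zx (lay p (-(ℓ : ℤ) - 1))) (zx (lay p (-(ℓ : ℤ)))))

/-- `layerCut H p z j` is the number of edges of `H` whose endpoints get different
signs on layer `j` (each unordered edge counted once). -/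
def layerCut {W : Type} [Fintype W] [DecidableEq W] (H : SimpleGraph W) [DecidableRel H.Adj]
    (p : ℕ) (z : W → Fin (2 * p + 1) → ℤˣ) (j : ℤ) : ℕ :=
  (Finset.univ.filter (fun pr : W × W =>
      H.Adj pr.1 pr.2 ∧ z pr.1 (lay p j) ≠ z pr.2 (lay p j))).card / 2

/-- The exponent `D(z) = Σ_{j=1}^p (C_j(z) - C_{-j}(z))` of a layered configuration. -/
def expnt {W : Type} [Fintype W] [DecidableEq W] (H : SimpleGraph W) [DecidableRel H.Adj]
    (p : ℕ) (z : W → Fin (2 * p + 1) → ℤˣ) : ℤ :=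
  ∑ j ∈ Finset.Icc 1 p, ((layerCut H p z (j : ℤ) : ℤ) - (layerCut H p z (-(j : ℤ)) : ℤ))

/-- The monomial contribution `z_a^{[0]} z_b^{[0]} ∏_x f(z_x)` of a configuration. -/
noncomputable def coeffTerm {W : Type} [Fintype W] [DecidableEq W] (p : ℕ) (β : ℕ → ℝ)
    (a b : W) (z : W → Fin (2 * p + 1) → ℤˣ) : ℂ :=
  ((z a (lay p 0) : ℤ) : ℂ) * ((z b (lay p 0) : ℤ) : ℂ) * ∏ x, kernel p β (z x)

/-- The mixer angles used in the reduction: `β_ℓ = ψ` for `1 ≤ ℓ ≤ p-2` and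
`β_{p-1} = β_p = π/4`. -/
noncomputable def betaAngles (p : ℕ) (ψ : ℝ) : ℕ → ℝ := fun ℓ =>
  if ℓ = p - 1 ∨ ℓ = p then Real.pi / 4 else ψ

end QAOA

namespace QAOA
section Vanish
open Finset

lemma units_int_univ : (Finset.univ : Finset ℤˣ) = {1, -1} := by decide

lemma mElem_unit (β : ℝ) (a b : ℤˣ) :
    ∑ t : ℤˣ, mElem β a t * mElemBar β t b = if a = b then 1 else 0 := by
  have key : Complex.cos (β:ℂ) ^ 2 - Complex.I ^ 2 * Complex.sin (β:ℂ) ^ 2 = 1 := by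
    linear_combination Complex.cos_sq_add_sin_sq (β:ℂ) - Complex.sin (β:ℂ)^2 * Complex.I_sq
  rw [units_int_univ]
  rcases Int.units_eq_one_or a with ha | ha <;>
    rcases Int.units_eq_one_or b with hb | hb <;>
      subst ha <;> subst hb <;>
      rw [Finset.sum_pair (by decide : (1:ℤˣ) ≠ -1)] <;>
      simp only [mElem, mElemBar, if_pos rfl, if_neg (by decide : ¬ (1:ℤˣ) = -1),
        if_neg (by decide : ¬ ((-1:ℤˣ)) = 1), if_neg (by decide : ¬ (1:ℤˣ) = -1)] <;>
      norm_num <;> (first | linear_combination key | ring)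

variable {W : Type} [Fintype W] [DecidableEq W]

noncomputable def mprod (β : ℝ) (s t : W → ℤˣ) : ℂ := ∏ x, mElem β (s x) (t x)
noncomputable def mbprod (β : ℝ) (s t : W → ℤˣ) : ℂ := ∏ x, mElemBar β (s x) (t x)
noncomputable def obsf (a b : W) (t : W → ℤˣ) : ℂ := ((t a : ℤ) : ℂ) * ((t b : ℤ) : ℂ)

variable (H : SimpleGraph W) [DecidableRel H.Adj]

/-- The cut size of a two-coloring, counting each edge once. -/
def cutz (s : W → ℤˣ) : ℕ :=
  (Finset.univ.filter (fun pr : W × W => H.Adj pr.1 pr.2 ∧ s pr.1 ≠ s pr.2)).card / 2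

lemma layerCut_eq_cutz (p : ℕ) (z : W → Fin (2 * p + 1) → ℤˣ) (j : ℤ) :
    layerCut H p z j = cutz H (fun x => z x (lay p j)) := rfl

lemma cutz_le_maxCut (s : W → ℤˣ) : cutz H s ≤ maxCut H := by
  classical
  set S : Finset W := Finset.univ.filter (fun x => s x = 1) with hS
  have hsplit : (Finset.univ.filter (fun pr : W × W => H.Adj pr.1 pr.2 ∧ s pr.1 ≠ s pr.2))
      = (Finset.univ.filter (fun pr : W × W => H.Adj pr.1 pr.2 ∧ pr.1 ∈ S ∧ pr.2 ∉ S))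
        ∪ (Finset.univ.filter (fun pr : W × W => H.Adj pr.1 pr.2 ∧ pr.1 ∉ S ∧ pr.2 ∈ S)) := by
    ext pr
    have h1 : pr.1 ∈ S ↔ s pr.1 = 1 := by simp [hS]
    have h2 : pr.2 ∈ S ↔ s pr.2 = 1 := by simp [hS]
    simp only [mem_filter, mem_union, mem_univ, true_and, h1, h2]
    rcases Int.units_eq_one_or (s pr.1) with e1 | e1 <;>
      rcases Int.units_eq_one_or (s pr.2) with e2 | e2 <;>
        rw [e1, e2] <;> simp <;> decide
  have hdisj : Disjoint
      (Finset.univ.filter (fun pr : W × W => H.Adj pr.1 pr.2 ∧ pr.1 ∈ S ∧ pr.2 ∉ S))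
      (Finset.univ.filter (fun pr : W × W => H.Adj pr.1 pr.2 ∧ pr.1 ∉ S ∧ pr.2 ∈ S)) := by
    rw [Finset.disjoint_left]
    intro pr hp hq
    simp only [mem_filter] at hp hq
    exact hq.2.2.1 hp.2.2.1
  have hswap : (Finset.univ.filter (fun pr : W × W => H.Adj pr.1 pr.2 ∧ pr.1 ∉ S ∧ pr.2 ∈ S)).card
      = (Finset.univ.filter (fun pr : W × W => H.Adj pr.1 pr.2 ∧ pr.1 ∈ S ∧ pr.2 ∉ S)).card := by
    apply Finset.card_nbij' (fun pr => (pr.2, pr.1)) (fun pr => (pr.2, pr.1)) <;>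
      intro pr hpr <;>
      simp only [mem_coe, mem_filter, mem_univ, true_and] at hpr ⊢ <;>
      first
        | rfl
        | exact ⟨hpr.1.symm, hpr.2.2, hpr.2.1⟩
  have hcard : (Finset.univ.filter (fun pr : W × W => H.Adj pr.1 pr.2 ∧ s pr.1 ≠ s pr.2)).card
      = 2 * cutSet H S := by
    rw [hsplit, Finset.card_union_of_disjoint hdisj, hswap, cutSet]; ring
  rw [cutz, hcard, Nat.mul_div_cancel_left _ (by norm_num : 0 < 2)]
  exact Finset.le_sup (Finset.mem_univ S)

lemma cutz_diff (a b : W) (u v : W → ℤˣ) (h : ∀ x, x ≠ a → x ≠ b → u x = v x) :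
    cutz H u ≤ cutz H v
      + ((Finset.univ.filter (fun y => H.Adj a y)).card
          + (Finset.univ.filter (fun y => H.Adj b y)).card) := by
  classical
  set dA := (Finset.univ.filter (fun y => H.Adj a y)).card with hdA
  set dB := (Finset.univ.filter (fun y => H.Adj b y)).card with hdB
  set Pu := (Finset.univ.filter (fun pr : W × W => H.Adj pr.1 pr.2 ∧ u pr.1 ≠ u pr.2)) with hPu
  set Pv := (Finset.univ.filter (fun pr : W × W => H.Adj pr.1 pr.2 ∧ v pr.1 ≠ v pr.2)) with hPv
  set T1a := (Finset.univ.filter (fun pr : W × W => pr.1 = a ∧ H.Adj pr.1 pr.2)) with hT1a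
  set T1b := (Finset.univ.filter (fun pr : W × W => pr.1 = b ∧ H.Adj pr.1 pr.2)) with hT1b
  set T2a := (Finset.univ.filter (fun pr : W × W => pr.2 = a ∧ H.Adj pr.1 pr.2)) with hT2a
  set T2b := (Finset.univ.filter (fun pr : W × W => pr.2 = b ∧ H.Adj pr.1 pr.2)) with hT2b
  have hsub : Pu ⊆ Pv ∪ (T1a ∪ T1b ∪ T2a ∪ T2b) := by
    intro pr hpr
    simp only [hPu, hPv, hT1a, hT1b, hT2a, hT2b, mem_filter, mem_union, mem_univ, true_and] at hpr ⊢
    by_cases c1 : pr.1 = a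
    · exact Or.inr (Or.inl (Or.inl (Or.inl ⟨c1, hpr.1⟩)))
    by_cases c2 : pr.1 = b
    · exact Or.inr (Or.inl (Or.inl (Or.inr ⟨c2, hpr.1⟩)))
    by_cases c3 : pr.2 = a
    · exact Or.inr (Or.inl (Or.inr ⟨c3, hpr.1⟩))
    by_cases c4 : pr.2 = b
    · exact Or.inr (Or.inr ⟨c4, hpr.1⟩)
    · refine Or.inl ⟨hpr.1, ?_⟩
      rw [← h pr.1 c1 c2, ← h pr.2 c3 c4]
      exact hpr.2
  have hc1a : T1a.card ≤ dA := by
    apply Finset.card_le_card_of_injOn (fun pr => pr.2)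
    · intro pr hpr
      simp only [hT1a, mem_coe, mem_filter, mem_univ, true_and] at hpr
      simp only [hdA, mem_coe, mem_filter, mem_univ, true_and]
      exact hpr.1 ▸ hpr.2
    · intro pr hpr qr hqr hpq
      simp only [hT1a, coe_filter, Set.mem_setOf_eq] at hpr hqr
      exact Prod.ext (hpr.2.1.trans hqr.2.1.symm) hpq
  have hc1b : T1b.card ≤ dB := by
    apply Finset.card_le_card_of_injOn (fun pr => pr.2)
    · intro pr hpr
      simp only [hT1b, mem_coe, mem_filter, mem_univ, true_and] at hpr
      simp only [hdB, mem_coe, mem_filter, mem_univ, true_and]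
      exact hpr.1 ▸ hpr.2
    · intro pr hpr qr hqr hpq
      simp only [hT1b, coe_filter, Set.mem_setOf_eq] at hpr hqr
      exact Prod.ext (hpr.2.1.trans hqr.2.1.symm) hpq
  have hc2a : T2a.card ≤ dA := by
    apply Finset.card_le_card_of_injOn (fun pr => pr.1)
    · intro pr hpr
      simp only [hT2a, mem_coe, mem_filter, mem_univ, true_and] at hpr
      simp only [hdA, mem_coe, mem_filter, mem_univ, true_and]
      exact H.adj_symm (hpr.1 ▸ hpr.2)
    · intro pr hpr qr hqr hpq
      simp only [hT2a, coe_filter, Set.mem_setOf_eq] at hpr hqr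
      exact Prod.ext hpq (hpr.2.1.trans hqr.2.1.symm)
  have hc2b : T2b.card ≤ dB := by
    apply Finset.card_le_card_of_injOn (fun pr => pr.1)
    · intro pr hpr
      simp only [hT2b, mem_coe, mem_filter, mem_univ, true_and] at hpr
      simp only [hdB, mem_coe, mem_filter, mem_univ, true_and]
      exact H.adj_symm (hpr.1 ▸ hpr.2)
    · intro pr hpr qr hqr hpq
      simp only [hT2b, coe_filter, Set.mem_setOf_eq] at hpr hqr
      exact Prod.ext hpq (hpr.2.1.trans hqr.2.1.symm)
  have hcard : Pu.card ≤ Pv.card + 2 * (dA + dB) := by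
    calc Pu.card ≤ (Pv ∪ (T1a ∪ T1b ∪ T2a ∪ T2b)).card := Finset.card_le_card hsub
      _ ≤ Pv.card + (T1a ∪ T1b ∪ T2a ∪ T2b).card := Finset.card_union_le _ _
      _ ≤ Pv.card + (((T1a ∪ T1b).card + T2a.card) + T2b.card) := by
          have := Finset.card_union_le (T1a ∪ T1b ∪ T2a) T2b
          have h2 := Finset.card_union_le (T1a ∪ T1b) T2a
          omega
      _ ≤ Pv.card + 2 * (dA + dB) := by
          have := Finset.card_union_le T1a T1b
          omega
  show Pu.card / 2 ≤ Pv.card / 2 + (dA + dB)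
  omega

end Vanish
end QAOA
namespace QAOA
section Vanish2
open Finset

variable {W : Type} [Fintype W] [DecidableEq W]
variable (H : SimpleGraph W) [DecidableRel H.Adj]

/-- Partial chain sums: all layers strictly inside `±(p-n)` plus layer `0` summed out. -/
noncomputable def chainSum (p : ℕ) (β : ℕ → ℝ) (a b : W) :
    ℕ → (W → ℤˣ) → (W → ℤˣ) → ℤ → ℂ
  | 0, s, s', k =>
      if k = 0 then ∑ t : W → ℤˣ, mprod (β p) s t * obsf a b t * mbprod (β p) t s' else 0
  | (n+1), s, s', k =>
      ∑ u : W → ℤˣ, ∑ v : W → ℤˣ,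
        mprod (β (p - (n+1))) s u * mbprod (β (p - (n+1))) v s' *
          chainSum p β a b n u v (k - ((cutz H u : ℤ) - (cutz H v : ℤ)))

lemma chainSum_zero_ne (p : ℕ) (β : ℕ → ℝ) (a b : W) (s s' : W → ℤˣ) (k : ℤ)
    (h : chainSum H p β a b 0 s s' k ≠ 0) :
    k = 0 ∧ ∀ x, x ≠ a → x ≠ b → s x = s' x := by
  rw [chainSum] at h
  by_cases hk : k = 0
  · refine ⟨hk, ?_⟩
    rw [if_pos hk] at h
    set F : W → ℤˣ → ℂ := fun x c => (mElem (β p) (s x) c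
            * ((if x = a then ((c : ℤ) : ℂ) else 1) * (if x = b then ((c : ℤ) : ℂ) else 1))
            * mElemBar (β p) c (s' x)) with hF
    have hrw : ∀ t : W → ℤˣ, mprod (β p) s t * obsf a b t * mbprod (β p) t s'
        = ∏ x, F x (t x) := by
      intro t
      rw [hF]
      rw [Finset.prod_mul_distrib, Finset.prod_mul_distrib, Finset.prod_mul_distrib,
        Finset.prod_ite_eq' Finset.univ a (fun x => ((t x : ℤ) : ℂ)),
        Finset.prod_ite_eq' Finset.univ b (fun x => ((t x : ℤ) : ℂ)),
        if_pos (Finset.mem_univ a), if_pos (Finset.mem_univ b)]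
      rfl
    rw [Finset.sum_congr rfl (fun t _ => hrw t)] at h
    rw [← Fintype.piFinset_univ,
      ← Finset.prod_univ_sum (fun _ => (Finset.univ : Finset ℤˣ)) F] at h
    intro x hxa hxb
    have hfac := Finset.prod_ne_zero_iff.mp h x (Finset.mem_univ x)
    have : ∑ c : ℤˣ, F x c
        = if s x = s' x then 1 else 0 := by
      rw [hF]
      rw [← mElem_unit (β p) (s x) (s' x)]
      apply Finset.sum_congr rfl
      intro c _
      simp only [if_neg hxa, if_neg hxb]
      ring
    rw [this] at hfac
    by_contra hne
    rw [if_neg hne] at hfac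
    exact hfac rfl
  · rw [if_neg hk] at h
    exact absurd rfl h

lemma chainSum_vanish (p : ℕ) (β : ℕ → ℝ) (a b : W) (E : ℕ)
    (hcd : ∀ u v : W → ℤˣ, (∀ x, x ≠ a → x ≠ b → u x = v x) → cutz H u ≤ cutz H v + E) :
    ∀ (n : ℕ) (s s' : W → ℤˣ) (k : ℤ), (n : ℤ) * (maxCut H : ℤ) + (E : ℤ) < k →
      chainSum H p β a b (n+1) s s' k = 0 := by
  intro n
  induction n with
  | zero =>
    intro s s' k hk
    rw [chainSum]
    apply Finset.sum_eq_zero; intro u _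
    apply Finset.sum_eq_zero; intro v _
    rcases eq_or_ne (chainSum H p β a b 0 u v (k - ((cutz H u : ℤ) - (cutz H v : ℤ)))) 0 with h | h
    · rw [h, mul_zero]
    · exfalso
      obtain ⟨hk0, hloc⟩ := chainSum_zero_ne H p β a b u v _ h
      have hle := hcd u v hloc
      simp only [Nat.cast_zero, zero_mul, zero_add] at hk
      omega
  | succ m ih =>
    intro s s' k hk
    rw [chainSum]
    apply Finset.sum_eq_zero; intro u _
    apply Finset.sum_eq_zero; intro v _
    rw [ih u v _ ?_, mul_zero]
    have h1 : (cutz H u : ℤ) ≤ (maxCut H : ℤ) := by exact_mod_cast cutz_le_maxCut H u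
    have h2 : (0 : ℤ) ≤ (cutz H v : ℤ) := Int.ofNat_nonneg _
    have hexp : ((m + 1 : ℕ) : ℤ) * (maxCut H : ℤ)
        = (m : ℤ) * (maxCut H : ℤ) + (maxCut H : ℤ) := by push_cast; ring
    rw [hexp] at hk
    linarith

end Vanish2
end QAOA
namespace QAOA
section Vanish3
open Finset

variable {W : Type} [Fintype W] [DecidableEq W]
variable (H : SimpleGraph W) [DecidableRel H.Adj]

/-- The chain of layer configurations: `nodeF n s w 0 = s`, `nodeF n s w m = w (m-1)`. -/
noncomputable def nodeF (n : ℕ) (s : W → ℤˣ) (w : Fin n → W → ℤˣ) : ℕ → W → ℤˣ := fun m =>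
  if h : 1 ≤ m ∧ m ≤ n then w ⟨m - 1, by omega⟩ else s

lemma nodeF_zero (n : ℕ) (s : W → ℤˣ) (w : Fin n → W → ℤˣ) : nodeF n s w 0 = s := by
  rw [nodeF, dif_neg]; omega

lemma nodeF_succ (n : ℕ) (s u : W → ℤˣ) (w : Fin n → W → ℤˣ) (m : ℕ) (hm : m ≤ n) :
    nodeF (n+1) s (Fin.cons u w) (m+1) = nodeF n u w m := by
  unfold nodeF
  by_cases h : 1 ≤ m ∧ m ≤ n
  · rw [dif_pos (by omega), dif_pos h]
    have he : (⟨m + 1 - 1, by omega⟩ : Fin (n+1)) = Fin.succ ⟨m - 1, by omega⟩ := by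
      apply Fin.ext; simp; omega
    rw [he, Fin.cons_succ]
  · have hm0 : m = 0 := by omega
    subst hm0
    rw [dif_pos (by omega), dif_neg h]
    have he : (⟨1 - 1, by omega⟩ : Fin (n+1)) = 0 := rfl
    rw [he, Fin.cons_zero]

/-- Forward chain amplitude. -/
noncomputable def fwdP (p : ℕ) (β : ℕ → ℝ) (n : ℕ) (s : W → ℤˣ) (w : Fin n → W → ℤˣ)
    (t : W → ℤˣ) : ℂ :=
  (∏ i : Fin n, mprod (β (p - n + (i : ℕ))) (nodeF n s w (i : ℕ)) (nodeF n s w ((i : ℕ) + 1))) *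
    mprod (β p) (nodeF n s w n) t

/-- Backward chain amplitude. -/
noncomputable def bwdP (p : ℕ) (β : ℕ → ℝ) (n : ℕ) (s' : W → ℤˣ) (w' : Fin n → W → ℤˣ)
    (t : W → ℤˣ) : ℂ :=
  (∏ i : Fin n, mbprod (β (p - n + (i : ℕ))) (nodeF n s' w' ((i : ℕ) + 1)) (nodeF n s' w' (i : ℕ))) *
    mbprod (β p) t (nodeF n s' w' n)

lemma fwdP_succ (p : ℕ) (β : ℕ → ℝ) (n : ℕ) (hn : n + 1 ≤ p) (s u : W → ℤˣ)
    (w : Fin n → W → ℤˣ) (t : W → ℤˣ) :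
    fwdP p β (n+1) s (Fin.cons u w : Fin (n+1) → W → ℤˣ) t = mprod (β (p - (n+1))) s u * fwdP p β n u w t := by
  unfold fwdP
  rw [Fin.prod_univ_succ]
  have h0 : ((0 : Fin (n+1)) : ℕ) = 0 := rfl
  have hn1 : nodeF (n+1) s (Fin.cons u w) (0 + 1) = u := by
    rw [nodeF_succ n s u w 0 (by omega), nodeF_zero]
  have hlast : nodeF (n+1) s (Fin.cons u w) (n+1) = nodeF n u w n :=
    nodeF_succ n s u w n (le_refl n)
  rw [h0, nodeF_zero, hn1, hlast]
  have hfac : ∀ i : Fin n,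
      mprod (β (p - (n+1) + ((i.succ : Fin (n+1)) : ℕ)))
        (nodeF (n+1) s (Fin.cons u w) ((i.succ : Fin (n+1)) : ℕ))
        (nodeF (n+1) s (Fin.cons u w) (((i.succ : Fin (n+1)) : ℕ) + 1))
      = mprod (β (p - n + (i : ℕ))) (nodeF n u w (i : ℕ)) (nodeF n u w ((i : ℕ) + 1)) := by
    intro i
    have hv : ((i.succ : Fin (n+1)) : ℕ) = (i : ℕ) + 1 := rfl
    have hidx : p - (n+1) + ((i : ℕ) + 1) = p - n + (i : ℕ) := by omega
    have e1 : nodeF (n+1) s (Fin.cons u w) ((i:ℕ)+1) = nodeF n u w (i:ℕ) :=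
      nodeF_succ n s u w (i:ℕ) i.isLt.le
    have e2 : nodeF (n+1) s (Fin.cons u w) ((i:ℕ)+1+1) = nodeF n u w ((i:ℕ)+1) :=
      nodeF_succ n s u w ((i:ℕ)+1) i.isLt
    rw [hv, e2, e1, hidx]
  rw [Finset.prod_congr rfl (fun i _ => hfac i)]
  have hzero : p - (n+1) + 0 = p - (n+1) := by omega
  rw [hzero]
  ring

lemma bwdP_succ (p : ℕ) (β : ℕ → ℝ) (n : ℕ) (hn : n + 1 ≤ p) (s' v : W → ℤˣ)
    (w' : Fin n → W → ℤˣ) (t : W → ℤˣ) :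
    bwdP p β (n+1) s' (Fin.cons v w' : Fin (n+1) → W → ℤˣ) t = mbprod (β (p - (n+1))) v s' * bwdP p β n v w' t := by
  unfold bwdP
  rw [Fin.prod_univ_succ]
  have h0 : ((0 : Fin (n+1)) : ℕ) = 0 := rfl
  have hn1 : nodeF (n+1) s' (Fin.cons v w') (0 + 1) = v := by
    rw [nodeF_succ n s' v w' 0 (by omega), nodeF_zero]
  have hlast : nodeF (n+1) s' (Fin.cons v w') (n+1) = nodeF n v w' n :=
    nodeF_succ n s' v w' n (le_refl n)
  rw [h0, nodeF_zero, hn1, hlast]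
  have hfac : ∀ i : Fin n,
      mbprod (β (p - (n+1) + ((i.succ : Fin (n+1)) : ℕ)))
        (nodeF (n+1) s' (Fin.cons v w') (((i.succ : Fin (n+1)) : ℕ) + 1))
        (nodeF (n+1) s' (Fin.cons v w') ((i.succ : Fin (n+1)) : ℕ))
      = mbprod (β (p - n + (i : ℕ))) (nodeF n v w' ((i : ℕ) + 1)) (nodeF n v w' (i : ℕ)) := by
    intro i
    have hv : ((i.succ : Fin (n+1)) : ℕ) = (i : ℕ) + 1 := rfl
    have hidx : p - (n+1) + ((i : ℕ) + 1) = p - n + (i : ℕ) := by omega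
    have e1 : nodeF (n+1) s' (Fin.cons v w') ((i:ℕ)+1) = nodeF n v w' (i:ℕ) :=
      nodeF_succ n s' v w' (i:ℕ) i.isLt.le
    have e2 : nodeF (n+1) s' (Fin.cons v w') ((i:ℕ)+1+1) = nodeF n v w' ((i:ℕ)+1) :=
      nodeF_succ n s' v w' ((i:ℕ)+1) i.isLt
    rw [hv, e2, e1, hidx]
  rw [Finset.prod_congr rfl (fun i _ => hfac i)]
  have hzero : p - (n+1) + 0 = p - (n+1) := by omega
  rw [hzero]
  ring

lemma sum_pi_succ (n : ℕ) (G : (Fin (n+1) → W → ℤˣ) → ℂ) :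
    (∑ ww : Fin (n+1) → W → ℤˣ, G ww)
      = ∑ u : W → ℤˣ, ∑ w : Fin n → W → ℤˣ, G (Fin.cons u w) := by
  rw [← (Fin.consEquiv (fun _ : Fin (n+1) => W → ℤˣ)).sum_comp G, Fintype.sum_prod_type]
  rfl

lemma chainSum_eq (p : ℕ) (β : ℕ → ℝ) (a b : W) :
    ∀ (n : ℕ), n ≤ p → ∀ (s s' : W → ℤˣ) (k : ℤ),
      chainSum H p β a b n s s' k
        = ∑ w : Fin n → W → ℤˣ, ∑ w' : Fin n → W → ℤˣ, ∑ t : W → ℤˣ,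
            (if k = ∑ i : Fin n, ((cutz H (w i) : ℤ) - (cutz H (w' i) : ℤ))
             then fwdP p β n s w t * obsf a b t * bwdP p β n s' w' t else 0) := by
  intro n
  induction n with
  | zero =>
    intro _ s s' k
    rw [chainSum]
    have hf : ∀ (w : Fin 0 → W → ℤˣ) (t : W → ℤˣ), fwdP p β 0 s w t = mprod (β p) s t := by
      intro w t; rw [fwdP, nodeF_zero]; simp
    have hb : ∀ (w' : Fin 0 → W → ℤˣ) (t : W → ℤˣ), bwdP p β 0 s' w' t = mbprod (β p) t s' := by
      intro w' t; rw [bwdP, nodeF_zero]; simp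
    conv_rhs => rw [Fintype.sum_unique]
    conv_rhs => rw [Fintype.sum_unique]
    simp only [hf, hb, Finset.univ_eq_empty, Finset.sum_empty]
    by_cases hk : k = 0 <;> simp [hk]
  | succ n ih =>
    intro hn1 s s' k
    have hn : n ≤ p := by omega
    rw [chainSum]
    have hpoint : ∀ (u v : W → ℤˣ) (w w' : Fin n → W → ℤˣ) (t : W → ℤˣ),
        mprod (β (p - (n+1))) s u * mbprod (β (p - (n+1))) v s' *
            (if k - ((cutz H u : ℤ) - (cutz H v : ℤ))
                = ∑ i : Fin n, ((cutz H (w i) : ℤ) - (cutz H (w' i) : ℤ))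
             then fwdP p β n u w t * obsf a b t * bwdP p β n v w' t else 0)
          = (if k = ∑ i : Fin (n+1),
                ((cutz H ((Fin.cons u w : Fin (n+1) → W → ℤˣ) i) : ℤ) - (cutz H ((Fin.cons v w' : Fin (n+1) → W → ℤˣ) i) : ℤ))
             then fwdP p β (n+1) s (Fin.cons u w : Fin (n+1) → W → ℤˣ) t * obsf a b t
                    * bwdP p β (n+1) s' (Fin.cons v w' : Fin (n+1) → W → ℤˣ) t else 0) := by
      intro u v w w' t
      rw [Fin.sum_univ_succ]
      simp only [Fin.cons_zero, Fin.cons_succ]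
      rw [fwdP_succ p β n hn1 s u w t, bwdP_succ p β n hn1 s' v w' t]
      by_cases hC : k = ((cutz H u : ℤ) - (cutz H v : ℤ))
          + ∑ i : Fin n, ((cutz H (w i) : ℤ) - (cutz H (w' i) : ℤ))
      · rw [if_pos hC, if_pos (by omega : k - ((cutz H u : ℤ) - (cutz H v : ℤ))
          = ∑ i : Fin n, ((cutz H (w i) : ℤ) - (cutz H (w' i) : ℤ)))]
        ring
      · rw [if_neg hC, if_neg (by omega : ¬ (k - ((cutz H u : ℤ) - (cutz H v : ℤ))
          = ∑ i : Fin n, ((cutz H (w i) : ℤ) - (cutz H (w' i) : ℤ)))), mul_zero]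
    calc
      ∑ u : W → ℤˣ, ∑ v : W → ℤˣ,
          mprod (β (p - (n+1))) s u * mbprod (β (p - (n+1))) v s' *
            chainSum H p β a b n u v (k - ((cutz H u : ℤ) - (cutz H v : ℤ)))
        = ∑ u : W → ℤˣ, ∑ v : W → ℤˣ, ∑ w : Fin n → W → ℤˣ, ∑ w' : Fin n → W → ℤˣ,
            ∑ t : W → ℤˣ,
            mprod (β (p - (n+1))) s u * mbprod (β (p - (n+1))) v s' *
              (if k - ((cutz H u : ℤ) - (cutz H v : ℤ))
                  = ∑ i : Fin n, ((cutz H (w i) : ℤ) - (cutz H (w' i) : ℤ))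
               then fwdP p β n u w t * obsf a b t * bwdP p β n v w' t else 0) := by
          refine Finset.sum_congr rfl fun u _ => Finset.sum_congr rfl fun v _ => ?_
          rw [ih hn u v (k - ((cutz H u : ℤ) - (cutz H v : ℤ)))]
          rw [Finset.mul_sum]
          refine Finset.sum_congr rfl fun w _ => ?_
          rw [Finset.mul_sum]
          refine Finset.sum_congr rfl fun w' _ => ?_
          rw [Finset.mul_sum]
      _ = ∑ u : W → ℤˣ, ∑ w : Fin n → W → ℤˣ, ∑ v : W → ℤˣ, ∑ w' : Fin n → W → ℤˣ,
            ∑ t : W → ℤˣ,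
            (if k = ∑ i : Fin (n+1),
                ((cutz H ((Fin.cons u w : Fin (n+1) → W → ℤˣ) i) : ℤ) - (cutz H ((Fin.cons v w' : Fin (n+1) → W → ℤˣ) i) : ℤ))
             then fwdP p β (n+1) s (Fin.cons u w : Fin (n+1) → W → ℤˣ) t * obsf a b t
                    * bwdP p β (n+1) s' (Fin.cons v w' : Fin (n+1) → W → ℤˣ) t else 0) := by
          refine Finset.sum_congr rfl fun u _ => ?_
          rw [Finset.sum_comm]
          exact Finset.sum_congr rfl fun w _ => Finset.sum_congr rfl fun v _ =>
            Finset.sum_congr rfl fun w' _ => Finset.sum_congr rfl fun t _ => hpoint u v w w' t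
      _ = ∑ ww : Fin (n+1) → W → ℤˣ, ∑ ww' : Fin (n+1) → W → ℤˣ, ∑ t : W → ℤˣ,
            (if k = ∑ i : Fin (n+1), ((cutz H (ww i) : ℤ) - (cutz H (ww' i) : ℤ))
             then fwdP p β (n+1) s ww t * obsf a b t * bwdP p β (n+1) s' ww' t else 0) := by
          rw [sum_pi_succ]
          refine Finset.sum_congr rfl fun u _ => ?_
          refine Finset.sum_congr rfl fun w _ => ?_
          rw [sum_pi_succ]

end Vanish3
end QAOA
namespace QAOA
section Vanish4
open Finset

variable {W : Type} [Fintype W] [DecidableEq W]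

/-- Packed tuple of layer configurations: `(s, s', w, w', t)`. -/
abbrev PK (p : ℕ) (W : Type) :=
  (W → ℤˣ) × (W → ℤˣ) × (Fin (p-1) → W → ℤˣ) × (Fin (p-1) → W → ℤˣ) × (W → ℤˣ)

/-- The layer configuration assigned to slot `i` by the packed tuple. -/
def layAt (p : ℕ) (q : PK p W) (i : Fin (2*p+1)) : W → ℤˣ :=
  if h1 : (i : ℕ) < p - 1 then q.2.2.2.1 ⟨p - 2 - (i : ℕ), by omega⟩
  else if h2 : (i : ℕ) = p - 1 then q.2.1
  else if h3 : (i : ℕ) = p then q.2.2.2.2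
  else if h4 : (i : ℕ) = p + 1 then q.1
  else q.2.2.1 ⟨(i : ℕ) - p - 2, by have hi := i.isLt; omega⟩

/-- Unpack a tuple into a full layered configuration. -/
def packE (p : ℕ) (q : PK p W) : W → Fin (2*p+1) → ℤˣ := fun x i => layAt p q i x

lemma lay_val (p : ℕ) (j : ℤ) (h1 : -(p:ℤ) ≤ j) (h2 : j ≤ p) :
    ((lay p j : Fin (2*p+1)) : ℕ) = (j + p).toNat := by
  have hlt : (j + p).toNat < 2*p+1 := by omega
  simp [lay, Nat.mod_eq_of_lt hlt]

lemma layAt_t (p : ℕ) (hp : 2 ≤ p) (q : PK p W) :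
    layAt p q (lay p 0) = q.2.2.2.2 := by
  have hv : ((lay p (0:ℤ) : Fin (2*p+1)) : ℕ) = p := by
    rw [lay_val p 0 (by omega) (by omega)]; omega
  rw [layAt, dif_neg (by omega), dif_neg (by omega), dif_pos hv]

lemma layAt_s (p : ℕ) (hp : 2 ≤ p) (q : PK p W) :
    layAt p q (lay p 1) = q.1 := by
  have hv : ((lay p (1:ℤ) : Fin (2*p+1)) : ℕ) = p + 1 := by
    rw [lay_val p 1 (by omega) (by omega)]; omega
  rw [layAt, dif_neg (by omega), dif_neg (by omega), dif_neg (by omega), dif_pos hv]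

lemma layAt_s' (p : ℕ) (hp : 2 ≤ p) (q : PK p W) :
    layAt p q (lay p (-1)) = q.2.1 := by
  have hv : ((lay p (-1:ℤ) : Fin (2*p+1)) : ℕ) = p - 1 := by
    rw [lay_val p (-1) (by omega) (by omega)]; omega
  rw [layAt, dif_neg (by omega), dif_pos hv]

lemma layAt_w (p : ℕ) (hp : 2 ≤ p) (q : PK p W) (j : ℤ) (h2 : 2 ≤ j) (hj : j ≤ p) :
    layAt p q (lay p j) = q.2.2.1 ⟨(j - 2).toNat, by omega⟩ := by
  have hv : ((lay p j : Fin (2*p+1)) : ℕ) = (j + p).toNat := lay_val p j (by omega) hj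
  rw [layAt, dif_neg (by omega), dif_neg (by omega), dif_neg (by omega), dif_neg (by omega)]
  refine congrArg _ ?_
  simp only [Fin.mk.injEq]
  omega

lemma layAt_w' (p : ℕ) (hp : 2 ≤ p) (q : PK p W) (j : ℤ) (h2 : j ≤ -2) (hj : -(p:ℤ) ≤ j) :
    layAt p q (lay p j) = q.2.2.2.1 ⟨(-j - 2).toNat, by omega⟩ := by
  have hv : ((lay p j : Fin (2*p+1)) : ℕ) = (j + p).toNat := lay_val p j hj (by omega)
  rw [layAt, dif_pos (by omega)]
  refine congrArg _ ?_
  simp only [Fin.mk.injEq]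
  omega

/-- Node evaluation: positive layers. -/
lemma layAt_nodeF (p : ℕ) (hp : 2 ≤ p) (q : PK p W) (j : ℤ) (m : ℕ)
    (hjm : j = (m : ℤ) + 1) (hm : m ≤ p - 1) :
    layAt p q (lay p j) = nodeF (p-1) q.1 q.2.2.1 m := by
  by_cases hm0 : m = 0
  · subst hm0
    have hj1 : j = 1 := by omega
    subst hj1
    rw [layAt_s p hp q, nodeF_zero]
  · rw [layAt_w p hp q j (by omega) (by omega)]
    rw [nodeF, dif_pos ⟨by omega, hm⟩]
    refine congrArg _ ?_
    simp only [Fin.mk.injEq]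
    omega

/-- Node evaluation: negative layers. -/
lemma layAt_nodeB (p : ℕ) (hp : 2 ≤ p) (q : PK p W) (j : ℤ) (m : ℕ)
    (hjm : j = -(m : ℤ) - 1) (hm : m ≤ p - 1) :
    layAt p q (lay p j) = nodeF (p-1) q.2.1 q.2.2.2.1 m := by
  by_cases hm0 : m = 0
  · subst hm0
    have hj1 : j = -1 := by omega
    subst hj1
    rw [layAt_s' p hp q, nodeF_zero]
  · rw [layAt_w' p hp q j (by omega) (by omega)]
    rw [nodeF, dif_pos ⟨by omega, hm⟩]
    refine congrArg _ ?_
    simp only [Fin.mk.injEq]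
    omega

lemma packE_bijective (p : ℕ) (hp : 2 ≤ p) :
    Function.Bijective (packE (W := W) p) := by
  rw [Fintype.bijective_iff_injective_and_card]
  constructor
  · intro q1 q2 h
    have hL : ∀ i : Fin (2*p+1), layAt p q1 i = layAt p q2 i := by
      intro i; funext x; exact congrFun (congrFun h x) i
    have hs : q1.1 = q2.1 := by
      have := hL (lay p 1); rwa [layAt_s p hp q1, layAt_s p hp q2] at this
    have hs' : q1.2.1 = q2.2.1 := by
      have := hL (lay p (-1)); rwa [layAt_s' p hp q1, layAt_s' p hp q2] at this
    have ht : q1.2.2.2.2 = q2.2.2.2.2 := by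
      have := hL (lay p 0); rwa [layAt_t p hp q1, layAt_t p hp q2] at this
    have hw : q1.2.2.1 = q2.2.2.1 := by
      funext i
      have hle : ((i : ℕ) : ℤ) + 2 ≤ (p : ℤ) := by
        have := i.isLt; omega
      have := hL (lay p (((i : ℕ) : ℤ) + 2))
      rw [layAt_w p hp q1 _ (by omega) hle, layAt_w p hp q2 _ (by omega) hle] at this
      have he : (⟨((((i : ℕ) : ℤ) + 2) - 2).toNat, by omega⟩ : Fin (p-1)) = i := by
        apply Fin.ext; simp only []; omega
      rwa [he] at this
    have hw' : q1.2.2.2.1 = q2.2.2.2.1 := by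
      funext i
      have hle : -(p:ℤ) ≤ -(((i : ℕ) : ℤ) + 2) := by
        have := i.isLt; omega
      have := hL (lay p (-(((i : ℕ) : ℤ) + 2)))
      rw [layAt_w' p hp q1 _ (by omega) hle, layAt_w' p hp q2 _ (by omega) hle] at this
      have he : (⟨(-(-(((i : ℕ) : ℤ) + 2)) - 2).toNat, by omega⟩ : Fin (p-1)) = i := by
        apply Fin.ext; simp only []; omega
      rwa [he] at this
    exact Prod.ext hs (Prod.ext hs' (Prod.ext hw (Prod.ext hw' ht)))
  · simp only [Fintype.card_prod, Fintype.card_fun, Fintype.card_fin]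
    rw [← pow_mul, ← pow_mul, ← pow_add, ← pow_add, ← pow_add, ← pow_add]
    congr 1
    rw [show 2*p+1 = 2*(p-1)+3 from by omega]
    ring

end Vanish4
end QAOA
namespace QAOA
section Vanish5
open Finset

variable {W : Type} [Fintype W] [DecidableEq W]

lemma sum_Icc_split (p : ℕ) (hp : 1 ≤ p) (g : ℕ → ℤ) :
    ∑ j ∈ Finset.Icc 1 p, g j = g 1 + ∑ i : Fin (p-1), g ((i:ℕ)+2) := by
  have h1 : Finset.Icc 1 p = insert 1 (Finset.Icc 2 p) := by
    ext j; simp only [Finset.mem_Icc, Finset.mem_insert]; omega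
  rw [h1, Finset.sum_insert (by simp [Finset.mem_Icc])]
  congr 1
  refine Finset.sum_bij'
    (fun (j : ℕ) (hj : j ∈ Finset.Icc 2 p) =>
      (⟨j - 2, by simp only [Finset.mem_Icc] at hj; omega⟩ : Fin (p-1)))
    (fun (i : Fin (p-1)) _ => (i:ℕ)+2) ?_ ?_ ?_ ?_ ?_
  · intro a ha; exact Finset.mem_univ _
  · intro i _; simp only [Finset.mem_Icc]; have := i.isLt; omega
  · intro a ha; simp only [Finset.mem_Icc] at ha; dsimp only; omega
  · intro i _; refine Fin.val_injective ?_; dsimp only; omega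
  · intro a ha; simp only [Finset.mem_Icc] at ha; dsimp only; congr 1; omega

lemma prod_Icc_fin (m : ℕ) (F : ℕ → ℂ) :
    ∏ ℓ ∈ Finset.Icc 1 m, F ℓ = ∏ i : Fin m, F ((i:ℕ)+1) := by
  refine Finset.prod_bij'
    (fun (j : ℕ) (hj : j ∈ Finset.Icc 1 m) =>
      (⟨j - 1, by simp only [Finset.mem_Icc] at hj; omega⟩ : Fin m))
    (fun (i : Fin m) _ => (i:ℕ)+1) ?_ ?_ ?_ ?_ ?_
  · intro a ha; exact Finset.mem_univ _
  · intro i _; simp only [Finset.mem_Icc]; have := i.isLt; omega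
  · intro a ha; simp only [Finset.mem_Icc] at ha; dsimp only; omega
  · intro i _; refine Fin.val_injective ?_; dsimp only; omega
  · intro a ha; simp only [Finset.mem_Icc] at ha; dsimp only; congr 1; omega

lemma coeffTerm_eq (p : ℕ) (β : ℕ → ℝ) (a b : W) (z : W → Fin (2*p+1) → ℤˣ) :
    coeffTerm p β a b z = (1/2 : ℂ) ^ (Fintype.card W) *
      (obsf a b (fun x => z x (lay p 0))
        * ((∏ ℓ ∈ Finset.Icc 1 (p-1),
              mprod (β ℓ) (fun x => z x (lay p ℓ)) (fun x => z x (lay p (ℓ+1))))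
          * mprod (β p) (fun x => z x (lay p p)) (fun x => z x (lay p 0))
          * mbprod (β p) (fun x => z x (lay p 0)) (fun x => z x (lay p (-(p:ℤ))))
          * (∏ ℓ ∈ Finset.Icc 1 (p-1),
              mbprod (β ℓ) (fun x => z x (lay p (-(ℓ:ℤ)-1))) (fun x => z x (lay p (-(ℓ:ℤ))))))) := by
  rw [coeffTerm]
  simp only [kernel, mprod, mbprod, obsf]
  rw [Finset.prod_mul_distrib, Finset.prod_mul_distrib, Finset.prod_mul_distrib,
    Finset.prod_mul_distrib, Finset.prod_const, Finset.card_univ]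
  rw [Finset.prod_comm (s := Finset.univ) (t := Finset.Icc 1 (p-1))]
  rw [Finset.prod_comm (s := Finset.univ) (t := Finset.Icc 1 (p-1))]
  ring

variable (H : SimpleGraph W) [DecidableRel H.Adj]

lemma expnt_packE (p : ℕ) (hp : 2 ≤ p) (q : PK p W) :
    expnt H p (packE p q)
      = ((cutz H q.1 : ℤ) - (cutz H q.2.1 : ℤ))
        + ∑ i : Fin (p-1), ((cutz H (q.2.2.1 i) : ℤ) - (cutz H (q.2.2.2.1 i) : ℤ)) := by
  have hrw : expnt H p (packE p q)
      = ∑ j ∈ Finset.Icc 1 p, ((cutz H (layAt p q (lay p (j:ℤ))) : ℤ)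
          - (cutz H (layAt p q (lay p (-(j:ℤ)))) : ℤ)) := rfl
  rw [hrw, sum_Icc_split p (by omega)]
  congr 1
  · rw [show (((1:ℕ)):ℤ) = (1:ℤ) from by norm_num, layAt_s p hp q, layAt_s' p hp q]
  · apply Finset.sum_congr rfl
    intro i _
    have hle : (((i:ℕ)+2 : ℕ) : ℤ) ≤ (p : ℤ) := by have := i.isLt; omega
    rw [layAt_w p hp q (((i:ℕ)+2 : ℕ) : ℤ) (by omega) hle,
      layAt_w' p hp q (-(((i:ℕ)+2 : ℕ) : ℤ)) (by omega) (by omega)]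
    have he1 : (⟨(((((i:ℕ)+2 : ℕ)) : ℤ) - 2).toNat, by omega⟩ : Fin (p-1)) = i := by
      refine Fin.val_injective ?_; simp only []; omega
    have he2 : (⟨((-(-((((i:ℕ)+2 : ℕ)) : ℤ))) - 2).toNat, by omega⟩ : Fin (p-1)) = i := by
      refine Fin.val_injective ?_; simp only []; omega
    rw [he1, he2]

lemma coeffTerm_packE (p : ℕ) (hp : 2 ≤ p) (β : ℕ → ℝ) (a b : W) (q : PK p W) :
    coeffTerm p β a b (packE p q)
      = (1/2 : ℂ) ^ (Fintype.card W) *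
          (fwdP p β (p-1) q.1 q.2.2.1 q.2.2.2.2 * obsf a b q.2.2.2.2
            * bwdP p β (p-1) q.2.1 q.2.2.2.1 q.2.2.2.2) := by
  rw [coeffTerm_eq p β a b (packE p q)]
  have hL : ∀ j : ℤ, (fun x => packE p q x (lay p j)) = layAt p q (lay p j) := fun _ => rfl
  simp only [hL]
  rw [layAt_t p hp q]
  rw [prod_Icc_fin (p-1) (fun ℓ =>
      mprod (β ℓ) (layAt p q (lay p (ℓ:ℤ))) (layAt p q (lay p ((ℓ:ℤ)+1))))]
  rw [prod_Icc_fin (p-1) (fun ℓ =>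
      mbprod (β ℓ) (layAt p q (lay p (-(ℓ:ℤ)-1))) (layAt p q (lay p (-(ℓ:ℤ)))))]
  rw [fwdP, bwdP]
  have hA : ∀ i : Fin (p-1),
      mprod (β ((i:ℕ)+1)) (layAt p q (lay p ((((i:ℕ)+1 : ℕ)):ℤ)))
          (layAt p q (lay p (((((i:ℕ)+1 : ℕ)):ℤ)+1)))
        = mprod (β (p - (p-1) + (i:ℕ))) (nodeF (p-1) q.1 q.2.2.1 (i:ℕ))
            (nodeF (p-1) q.1 q.2.2.1 ((i:ℕ)+1)) := by
    intro i
    rw [layAt_nodeF p hp q ((((i:ℕ)+1 : ℕ)):ℤ) (i:ℕ) (by push_cast; ring)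
        (by have := i.isLt; omega),
      layAt_nodeF p hp q (((((i:ℕ)+1 : ℕ)):ℤ)+1) ((i:ℕ)+1) (by push_cast; ring)
        (by have := i.isLt; omega),
      show p - (p-1) + (i:ℕ) = (i:ℕ)+1 from by omega]
  have hB : ∀ i : Fin (p-1),
      mbprod (β ((i:ℕ)+1)) (layAt p q (lay p (-((((i:ℕ)+1 : ℕ)):ℤ)-1)))
          (layAt p q (lay p (-((((i:ℕ)+1 : ℕ)):ℤ))))
        = mbprod (β (p - (p-1) + (i:ℕ))) (nodeF (p-1) q.2.1 q.2.2.2.1 ((i:ℕ)+1))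
            (nodeF (p-1) q.2.1 q.2.2.2.1 (i:ℕ)) := by
    intro i
    rw [layAt_nodeB p hp q (-((((i:ℕ)+1 : ℕ)):ℤ)-1) ((i:ℕ)+1) (by push_cast; ring)
        (by have := i.isLt; omega),
      layAt_nodeB p hp q (-((((i:ℕ)+1 : ℕ)):ℤ)) (i:ℕ) (by push_cast; ring)
        (by have := i.isLt; omega),
      show p - (p-1) + (i:ℕ) = (i:ℕ)+1 from by omega]
  rw [Finset.prod_congr rfl (fun i _ => hA i), Finset.prod_congr rfl (fun i _ => hB i)]
  rw [layAt_nodeF p hp q ((p:ℕ):ℤ) (p-1) (by push_cast [Nat.cast_sub (by omega : 1 ≤ p)]; ring)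
    (le_refl (p-1))]
  rw [layAt_nodeB p hp q (-((p:ℕ):ℤ)) (p-1) (by push_cast [Nat.cast_sub (by omega : 1 ≤ p)]; ring)
    (le_refl (p-1))]
  ring

/-- General degree-vanishing theorem for arbitrary graphs and angles. -/
theorem vanish_general (p : ℕ) (hp : 2 ≤ p) (β : ℕ → ℝ) (a b : W) (k : ℤ) (E : ℕ)
    (hcd : ∀ u v : W → ℤˣ, (∀ x, x ≠ a → x ≠ b → u x = v x) → cutz H u ≤ cutz H v + E)
    (hk : ((p:ℤ) - 1) * (maxCut H : ℤ) + (E:ℤ) < k) :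
    ∑ z ∈ Finset.univ.filter (fun z : W → Fin (2*p+1) → ℤˣ => expnt H p z = k),
      coeffTerm p β a b z = 0 := by
  classical
  rw [Finset.sum_filter]
  rw [← Fintype.sum_bijective (packE p) (packE_bijective p hp)
    (fun q => if expnt H p (packE p q) = k then coeffTerm p β a b (packE p q) else 0)
    (fun z => if expnt H p z = k then coeffTerm p β a b z else 0)
    (fun q => rfl)]
  have hterm : ∀ q : PK p W,
      (if expnt H p (packE p q) = k then coeffTerm p β a b (packE p q) else 0)
        = (1/2 : ℂ) ^ (Fintype.card W) *
            (if k - ((cutz H q.1 : ℤ) - (cutz H q.2.1 : ℤ))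
                = ∑ i : Fin (p-1), ((cutz H (q.2.2.1 i) : ℤ) - (cutz H (q.2.2.2.1 i) : ℤ))
             then fwdP p β (p-1) q.1 q.2.2.1 q.2.2.2.2 * obsf a b q.2.2.2.2
                    * bwdP p β (p-1) q.2.1 q.2.2.2.1 q.2.2.2.2 else 0) := by
    intro q
    rw [expnt_packE H p hp q, coeffTerm_packE p hp β a b q]
    by_cases hC : ((cutz H q.1 : ℤ) - (cutz H q.2.1 : ℤ))
        + ∑ i : Fin (p-1), ((cutz H (q.2.2.1 i) : ℤ) - (cutz H (q.2.2.2.1 i) : ℤ)) = k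
    · rw [if_pos hC, if_pos (by omega : k - ((cutz H q.1 : ℤ) - (cutz H q.2.1 : ℤ))
        = ∑ i : Fin (p-1), ((cutz H (q.2.2.1 i) : ℤ) - (cutz H (q.2.2.2.1 i) : ℤ)))]
    · rw [if_neg hC, if_neg (by omega : ¬ (k - ((cutz H q.1 : ℤ) - (cutz H q.2.1 : ℤ))
        = ∑ i : Fin (p-1), ((cutz H (q.2.2.1 i) : ℤ) - (cutz H (q.2.2.2.1 i) : ℤ)))), mul_zero]
  rw [Finset.sum_congr rfl (fun q _ => hterm q), ← Finset.mul_sum]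
  simp only [Fintype.sum_prod_type]
  have hzero : ∀ s s' : W → ℤˣ,
      (∑ w : Fin (p-1) → W → ℤˣ, ∑ w' : Fin (p-1) → W → ℤˣ, ∑ t : W → ℤˣ,
        (if k - ((cutz H s : ℤ) - (cutz H s' : ℤ))
            = ∑ i : Fin (p-1), ((cutz H (w i) : ℤ) - (cutz H (w' i) : ℤ))
         then fwdP p β (p-1) s w t * obsf a b t * bwdP p β (p-1) s' w' t else 0)) = 0 := by
    intro s s'
    rw [← chainSum_eq H p β a b (p-1) (by omega) s s'
      (k - ((cutz H s : ℤ) - (cutz H s' : ℤ)))]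
    have hrw : p - 1 = (p - 2) + 1 := by omega
    rw [hrw]
    apply chainSum_vanish H p β a b E hcd (p-2) s s'
    have h1 : (cutz H s : ℤ) ≤ (maxCut H : ℤ) := by exact_mod_cast cutz_le_maxCut H s
    have h2 : (0:ℤ) ≤ (cutz H s' : ℤ) := Int.ofNat_nonneg _
    have h3 : ((p - 2 : ℕ) : ℤ) = (p:ℤ) - 2 := by
      push_cast [Nat.cast_sub (by omega : 2 ≤ p)]; ring
    rw [h3]
    have h4 : ((p:ℤ) - 2) * (maxCut H : ℤ) = ((p:ℤ) - 1) * (maxCut H : ℤ) - (maxCut H : ℤ) := by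
      ring
    linarith
  rw [Finset.sum_congr rfl (fun s _ => Finset.sum_congr rfl (fun s' _ => hzero s s'))]
  simp

end Vanish5
end QAOA
namespace QAOA
section VanishG
open Finset

variable {V : Type} [Fintype V] [DecidableEq V]

/-- Degree of a vertex in `G'`. -/
def degp (n0 : ℕ) (G : SimpleGraph V) [DecidableRel G.Adj] (t : GPV V n0) : ℕ :=
  (Finset.univ.filter (fun y => (Gp n0 G).Adj t y)).card

variable (n0 : ℕ) (G : SimpleGraph V) [DecidableRel G.Adj]

lemma adj_unfold {x y : GPV V n0} (h : (Gp n0 G).Adj x y) :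
    x ≠ y ∧ (gpRel n0 G x y = true ∨ gpRel n0 G y x = true) :=
  (SimpleGraph.fromRel_adj _ x y).mp h

lemma nb_L (hn0 : 0 < n0) (u : V) (i : Fin (n0+1)) :
    (Finset.univ.filter (fun y => (Gp n0 G).Adj (GPV.L u i) y))
      ⊆ ((Finset.univ : Finset (Fin (10*n0))).image (GPV.R u))
        ∪ ((Finset.univ : Finset V).image (fun v => GPV.L v i))
        ∪ {xzero V n0 hn0, yzero V n0 hn0, GPV.W} := by
  intro y hy
  simp only [Finset.mem_filter, Finset.mem_univ, true_and] at hy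
  obtain ⟨hne, hrel⟩ := adj_unfold n0 G hy
  simp only [Finset.mem_union, Finset.mem_image, Finset.mem_insert, Finset.mem_singleton]
  cases y with
  | L v j =>
    have hij : (i : ℕ) = (j : ℕ) := by
      rcases hrel with h | h
      · rw [show gpRel n0 G (GPV.L u i) (GPV.L v j) = (decide (G.Adj u v) && ((i:ℕ) == (j:ℕ)))
          from rfl] at h
        exact eq_of_beq (by rw [Bool.and_eq_true] at h; exact h.2)
      · rw [show gpRel n0 G (GPV.L v j) (GPV.L u i) = (decide (G.Adj v u) && ((j:ℕ) == (i:ℕ)))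
          from rfl] at h
        exact (eq_of_beq (by rw [Bool.and_eq_true] at h; exact h.2)).symm
    have : j = i := Fin.val_injective hij.symm
    subst this
    exact Or.inl (Or.inr ⟨v, Finset.mem_univ v, rfl⟩)
  | R v j =>
    have huv : u = v := by
      rcases hrel with h | h
      · rw [show gpRel n0 G (GPV.L u i) (GPV.R v j) = (u == v) from rfl] at h
        exact eq_of_beq h
      · rw [show gpRel n0 G (GPV.R v j) (GPV.L u i) = false from rfl] at h
        exact Bool.noConfusion h
    subst huv
    exact Or.inl (Or.inl ⟨j, Finset.mem_univ j, rfl⟩)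
  | X j =>
    have hj : (j : ℕ) = 0 := by
      rcases hrel with h | h
      · rw [show gpRel n0 G (GPV.L u i) (GPV.X j) = false from rfl] at h
        exact Bool.noConfusion h
      · rw [show gpRel n0 G (GPV.X j) (GPV.L u i) = ((j:ℕ) == 0) from rfl] at h
        exact eq_of_beq h
    refine Or.inr (Or.inl ?_)
    exact congrArg GPV.X (Fin.val_injective hj)
  | Y j =>
    have hj : (j : ℕ) = 0 := by
      rcases hrel with h | h
      · rw [show gpRel n0 G (GPV.L u i) (GPV.Y j) = false from rfl] at h
        exact Bool.noConfusion h
      · rw [show gpRel n0 G (GPV.Y j) (GPV.L u i) = ((j:ℕ) == 0) from rfl] at h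
        exact eq_of_beq h
    refine Or.inr (Or.inr (Or.inl ?_))
    exact congrArg GPV.Y (Fin.val_injective hj)
  | W => exact Or.inr (Or.inr (Or.inr rfl))

lemma nb_R (hn0 : 0 < n0) (u : V) (i : Fin (10*n0)) :
    (Finset.univ.filter (fun y => (Gp n0 G).Adj (GPV.R u i) y))
      ⊆ ((Finset.univ : Finset (Fin (n0+1))).image (GPV.L u))
        ∪ {xzero V n0 hn0, yzero V n0 hn0} := by
  intro y hy
  simp only [Finset.mem_filter, Finset.mem_univ, true_and] at hy
  obtain ⟨hne, hrel⟩ := adj_unfold n0 G hy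
  simp only [Finset.mem_union, Finset.mem_image, Finset.mem_insert, Finset.mem_singleton]
  cases y with
  | L v j =>
    have hvu : v = u := by
      rcases hrel with h | h
      · rw [show gpRel n0 G (GPV.R u i) (GPV.L v j) = false from rfl] at h
        exact Bool.noConfusion h
      · rw [show gpRel n0 G (GPV.L v j) (GPV.R u i) = (v == u) from rfl] at h
        exact eq_of_beq h
    subst hvu
    exact Or.inl ⟨j, Finset.mem_univ j, rfl⟩
  | R v j =>
    exfalso
    rcases hrel with h | h
    · rw [show gpRel n0 G (GPV.R u i) (GPV.R v j) = false from rfl] at h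
      exact Bool.noConfusion h
    · rw [show gpRel n0 G (GPV.R v j) (GPV.R u i) = false from rfl] at h
      exact Bool.noConfusion h
  | X j =>
    have hj : (j : ℕ) = 0 := by
      rcases hrel with h | h
      · rw [show gpRel n0 G (GPV.R u i) (GPV.X j) = false from rfl] at h
        exact Bool.noConfusion h
      · rw [show gpRel n0 G (GPV.X j) (GPV.R u i) = ((j:ℕ) == 0) from rfl] at h
        exact eq_of_beq h
    exact Or.inr (Or.inl (congrArg GPV.X (Fin.val_injective hj)))
  | Y j =>
    have hj : (j : ℕ) = 0 := by
      rcases hrel with h | h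
      · rw [show gpRel n0 G (GPV.R u i) (GPV.Y j) = false from rfl] at h
        exact Bool.noConfusion h
      · rw [show gpRel n0 G (GPV.Y j) (GPV.R u i) = ((j:ℕ) == 0) from rfl] at h
        exact eq_of_beq h
    exact Or.inr (Or.inr (congrArg GPV.Y (Fin.val_injective hj)))
  | W =>
    exfalso
    rcases hrel with h | h
    · rw [show gpRel n0 G (GPV.R u i) GPV.W = false from rfl] at h
      exact Bool.noConfusion h
    · rw [show gpRel n0 G GPV.W (GPV.R u i) = false from rfl] at h
      exact Bool.noConfusion h

lemma nb_W (hn0 : 0 < n0) :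
    (Finset.univ.filter (fun y => (Gp n0 G).Adj GPV.W y))
      ⊆ ((Finset.univ : Finset V).image (fun v => GPV.L v ⟨0, Nat.succ_pos n0⟩))
        ∪ {xzero V n0 hn0, yzero V n0 hn0} := by
  intro y hy
  simp only [Finset.mem_filter, Finset.mem_univ, true_and] at hy
  obtain ⟨hne, hrel⟩ := adj_unfold n0 G hy
  simp only [Finset.mem_union, Finset.mem_image, Finset.mem_insert, Finset.mem_singleton]
  cases y with
  | L v j =>
    have hj : (j : ℕ) = 0 := by
      rcases hrel with h | h
      · rw [show gpRel n0 G GPV.W (GPV.L v j) = ((j:ℕ) == 0) from rfl] at h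
        exact eq_of_beq h
      · rw [show gpRel n0 G (GPV.L v j) GPV.W = false from rfl] at h
        exact Bool.noConfusion h
    have : j = ⟨0, Nat.succ_pos n0⟩ := Fin.val_injective hj
    subst this
    exact Or.inl ⟨v, Finset.mem_univ v, rfl⟩
  | R v j =>
    exfalso
    rcases hrel with h | h
    · rw [show gpRel n0 G GPV.W (GPV.R v j) = false from rfl] at h
      exact Bool.noConfusion h
    · rw [show gpRel n0 G (GPV.R v j) GPV.W = false from rfl] at h
      exact Bool.noConfusion h
  | X j =>
    have hj : (j : ℕ) = 0 := by
      rcases hrel with h | h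
      · rw [show gpRel n0 G GPV.W (GPV.X j) = ((j:ℕ) == 0) from rfl] at h
        exact eq_of_beq h
      · rw [show gpRel n0 G (GPV.X j) GPV.W = false from rfl] at h
        exact Bool.noConfusion h
    exact Or.inr (Or.inl (congrArg GPV.X (Fin.val_injective hj)))
  | Y j =>
    have hj : (j : ℕ) = 0 := by
      rcases hrel with h | h
      · rw [show gpRel n0 G GPV.W (GPV.Y j) = ((j:ℕ) == 0) from rfl] at h
        exact eq_of_beq h
      · rw [show gpRel n0 G (GPV.Y j) GPV.W = false from rfl] at h
        exact Bool.noConfusion h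
    exact Or.inr (Or.inr (congrArg GPV.Y (Fin.val_injective hj)))
  | W => exact absurd rfl hne

lemma nb_X (i : Fin (100*n0*n0)) :
    (Finset.univ.filter (fun y => (Gp n0 G).Adj (GPV.X i) y))
      ⊆ ((Finset.univ : Finset (Fin (100*n0*n0))).image GPV.Y)
        ∪ ((Finset.univ : Finset (V × Fin (n0+1))).image (fun q => GPV.L q.1 q.2))
        ∪ ((Finset.univ : Finset (V × Fin (10*n0))).image (fun q => GPV.R q.1 q.2))
        ∪ {GPV.W} := by
  intro y hy
  simp only [Finset.mem_filter, Finset.mem_univ, true_and] at hy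
  obtain ⟨hne, hrel⟩ := adj_unfold n0 G hy
  simp only [Finset.mem_union, Finset.mem_image, Finset.mem_singleton]
  cases y with
  | Y j => exact Or.inl (Or.inl (Or.inl ⟨j, Finset.mem_univ j, rfl⟩))
  | L v j => exact Or.inl (Or.inl (Or.inr ⟨(v, j), Finset.mem_univ _, rfl⟩))
  | R v j => exact Or.inl (Or.inr ⟨(v, j), Finset.mem_univ _, rfl⟩)
  | W => exact Or.inr rfl
  | X j =>
    exfalso
    rcases hrel with h | h
    · rw [show gpRel n0 G (GPV.X i) (GPV.X j) = false from rfl] at h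
      exact Bool.noConfusion h
    · rw [show gpRel n0 G (GPV.X j) (GPV.X i) = false from rfl] at h
      exact Bool.noConfusion h

lemma nb_Y (i : Fin (100*n0*n0)) :
    (Finset.univ.filter (fun y => (Gp n0 G).Adj (GPV.Y i) y))
      ⊆ ((Finset.univ : Finset (Fin (100*n0*n0))).image GPV.X)
        ∪ ((Finset.univ : Finset (V × Fin (n0+1))).image (fun q => GPV.L q.1 q.2))
        ∪ ((Finset.univ : Finset (V × Fin (10*n0))).image (fun q => GPV.R q.1 q.2))
        ∪ {GPV.W} := by
  intro y hy
  simp only [Finset.mem_filter, Finset.mem_univ, true_and] at hy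
  obtain ⟨hne, hrel⟩ := adj_unfold n0 G hy
  simp only [Finset.mem_union, Finset.mem_image, Finset.mem_singleton]
  cases y with
  | X j => exact Or.inl (Or.inl (Or.inl ⟨j, Finset.mem_univ j, rfl⟩))
  | L v j => exact Or.inl (Or.inl (Or.inr ⟨(v, j), Finset.mem_univ _, rfl⟩))
  | R v j => exact Or.inl (Or.inr ⟨(v, j), Finset.mem_univ _, rfl⟩)
  | W => exact Or.inr rfl
  | Y j =>
    exfalso
    rcases hrel with h | h
    · rw [show gpRel n0 G (GPV.Y i) (GPV.Y j) = false from rfl] at h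
      exact Bool.noConfusion h
    · rw [show gpRel n0 G (GPV.Y j) (GPV.Y i) = false from rfl] at h
      exact Bool.noConfusion h

lemma nb_X_small (i : Fin (100*n0*n0)) (hi : (i : ℕ) ≠ 0) :
    (Finset.univ.filter (fun y => (Gp n0 G).Adj (GPV.X i) y))
      ⊆ ((Finset.univ : Finset (Fin (100*n0*n0))).image GPV.Y) := by
  intro y hy
  simp only [Finset.mem_filter, Finset.mem_univ, true_and] at hy
  obtain ⟨hne, hrel⟩ := adj_unfold n0 G hy
  simp only [Finset.mem_image]
  cases y with
  | Y j => exact ⟨j, Finset.mem_univ j, rfl⟩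
  | L v j =>
    exfalso
    rcases hrel with h | h
    · rw [show gpRel n0 G (GPV.X i) (GPV.L v j) = ((i:ℕ) == 0) from rfl] at h
      exact hi (eq_of_beq h)
    · rw [show gpRel n0 G (GPV.L v j) (GPV.X i) = false from rfl] at h
      exact Bool.noConfusion h
  | R v j =>
    exfalso
    rcases hrel with h | h
    · rw [show gpRel n0 G (GPV.X i) (GPV.R v j) = ((i:ℕ) == 0) from rfl] at h
      exact hi (eq_of_beq h)
    · rw [show gpRel n0 G (GPV.R v j) (GPV.X i) = false from rfl] at h
      exact Bool.noConfusion h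
  | X j =>
    exfalso
    rcases hrel with h | h
    · rw [show gpRel n0 G (GPV.X i) (GPV.X j) = false from rfl] at h
      exact Bool.noConfusion h
    · rw [show gpRel n0 G (GPV.X j) (GPV.X i) = false from rfl] at h
      exact Bool.noConfusion h
  | W =>
    exfalso
    rcases hrel with h | h
    · rw [show gpRel n0 G (GPV.X i) GPV.W = false from rfl] at h
      exact Bool.noConfusion h
    · rw [show gpRel n0 G GPV.W (GPV.X i) = ((i:ℕ) == 0) from rfl] at h
      exact hi (eq_of_beq h)

lemma nb_Y_small (i : Fin (100*n0*n0)) (hi : (i : ℕ) ≠ 0) :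
    (Finset.univ.filter (fun y => (Gp n0 G).Adj (GPV.Y i) y))
      ⊆ ((Finset.univ : Finset (Fin (100*n0*n0))).image GPV.X) := by
  intro y hy
  simp only [Finset.mem_filter, Finset.mem_univ, true_and] at hy
  obtain ⟨hne, hrel⟩ := adj_unfold n0 G hy
  simp only [Finset.mem_image]
  cases y with
  | X j => exact ⟨j, Finset.mem_univ j, rfl⟩
  | L v j =>
    exfalso
    rcases hrel with h | h
    · rw [show gpRel n0 G (GPV.Y i) (GPV.L v j) = ((i:ℕ) == 0) from rfl] at h
      exact hi (eq_of_beq h)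
    · rw [show gpRel n0 G (GPV.L v j) (GPV.Y i) = false from rfl] at h
      exact Bool.noConfusion h
  | R v j =>
    exfalso
    rcases hrel with h | h
    · rw [show gpRel n0 G (GPV.Y i) (GPV.R v j) = ((i:ℕ) == 0) from rfl] at h
      exact hi (eq_of_beq h)
    · rw [show gpRel n0 G (GPV.R v j) (GPV.Y i) = false from rfl] at h
      exact Bool.noConfusion h
  | Y j =>
    exfalso
    rcases hrel with h | h
    · rw [show gpRel n0 G (GPV.Y i) (GPV.Y j) = false from rfl] at h
      exact Bool.noConfusion h
    · rw [show gpRel n0 G (GPV.Y j) (GPV.Y i) = false from rfl] at h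
      exact Bool.noConfusion h
  | W =>
    exfalso
    rcases hrel with h | h
    · rw [show gpRel n0 G (GPV.Y i) GPV.W = false from rfl] at h
      exact Bool.noConfusion h
    · rw [show gpRel n0 G GPV.W (GPV.Y i) = ((i:ℕ) == 0) from rfl] at h
      exact hi (eq_of_beq h)

end VanishG
end QAOA
namespace QAOA
section VanishF
open Finset

lemma card_union3_le {γ : Type} [DecidableEq γ] (A B C : Finset γ) :
    (A ∪ B ∪ C).card ≤ A.card + B.card + C.card := by
  have h1 := Finset.card_union_le (A ∪ B) C
  have h2 := Finset.card_union_le A B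
  omega

lemma card_union4_le {γ : Type} [DecidableEq γ] (A B C D : Finset γ) :
    (A ∪ B ∪ C ∪ D).card ≤ A.card + B.card + C.card + D.card := by
  have h1 := Finset.card_union_le (A ∪ B ∪ C) D
  have h2 := card_union3_le A B C
  omega

variable {V : Type} [Fintype V] [DecidableEq V]
variable (n0 : ℕ) (G : SimpleGraph V) [DecidableRel G.Adj]

lemma degp_le_all (hn0 : 0 < n0) (hV : Fintype.card V = n0) (t : GPV V n0) :
    degp n0 G t ≤ 111*(n0*n0) + n0 + 1 := by
  have hsq : n0 ≤ n0 * n0 := Nat.le_mul_of_pos_left n0 hn0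
  have e1 : n0*(n0+1) = n0*n0 + n0 := by ring
  have e2 : n0*(10*n0) = 10*(n0*n0) := by ring
  have cL : ((Finset.univ : Finset (V × Fin (n0+1))).image
      (fun q => GPV.L (n0 := n0) q.1 q.2)).card ≤ n0*(n0+1) :=
    le_trans Finset.card_image_le (by simp [hV])
  have cR : ((Finset.univ : Finset (V × Fin (10*n0))).image
      (fun q => GPV.R (n0 := n0) q.1 q.2)).card ≤ n0*(10*n0) :=
    le_trans Finset.card_image_le (by simp [hV])
  have cY : ((Finset.univ : Finset (Fin (100*n0*n0))).image (GPV.Y (V := V))).card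
      ≤ 100*(n0*n0) := le_trans Finset.card_image_le (by simp [Nat.mul_assoc])
  have cX : ((Finset.univ : Finset (Fin (100*n0*n0))).image (GPV.X (V := V))).card
      ≤ 100*(n0*n0) := le_trans Finset.card_image_le (by simp [Nat.mul_assoc])
  have c3 : ({xzero V n0 hn0, yzero V n0 hn0, GPV.W} : Finset (GPV V n0)).card ≤ 3 := by
    refine le_trans (Finset.card_insert_le _ _) ?_
    have h2 := Finset.card_insert_le (yzero V n0 hn0) ({GPV.W} : Finset (GPV V n0))
    simp only [Finset.card_singleton] at h2
    omega
  cases t with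
  | X i =>
    refine le_trans (Finset.card_le_card (nb_X n0 G i))
      (le_trans (card_union4_le _ _ _ _) ?_)
    simp only [Finset.card_singleton]
    omega
  | Y i =>
    refine le_trans (Finset.card_le_card (nb_Y n0 G i))
      (le_trans (card_union4_le _ _ _ _) ?_)
    simp only [Finset.card_singleton]
    omega
  | L u i =>
    have cRu : ((Finset.univ : Finset (Fin (10*n0))).image (GPV.R (n0 := n0) u)).card
        ≤ 10*n0 := le_trans Finset.card_image_le (by simp)
    have cLs : ((Finset.univ : Finset V).image (fun v => GPV.L (n0 := n0) v i)).card
        ≤ n0 := le_trans Finset.card_image_le (by simp [hV])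
    refine le_trans (Finset.card_le_card (nb_L n0 G hn0 u i))
      (le_trans (card_union3_le _ _ _) ?_)
    omega
  | R u i =>
    have cLu : ((Finset.univ : Finset (Fin (n0+1))).image (GPV.L (n0 := n0) u)).card
        ≤ n0+1 := le_trans Finset.card_image_le (by simp)
    have c2 : ({xzero V n0 hn0, yzero V n0 hn0} : Finset (GPV V n0)).card ≤ 2 := by
      refine le_trans (Finset.card_insert_le _ _) ?_
      simp
    refine le_trans (Finset.card_le_card (nb_R n0 G hn0 u i))
      (le_trans (Finset.card_union_le _ _) ?_)
    omega
  | W =>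
    have cLs : ((Finset.univ : Finset V).image
        (fun v => GPV.L (n0 := n0) v ⟨0, Nat.succ_pos n0⟩)).card ≤ n0 :=
      le_trans Finset.card_image_le (by simp [hV])
    have c2 : ({xzero V n0 hn0, yzero V n0 hn0} : Finset (GPV V n0)).card ≤ 2 := by
      refine le_trans (Finset.card_insert_le _ _) ?_
      simp
    refine le_trans (Finset.card_le_card (nb_W n0 G hn0))
      (le_trans (Finset.card_union_le _ _) ?_)
    omega

lemma degp_le_small (hn0 : 0 < n0) (hV : Fintype.card V = n0) (t : GPV V n0)
    (hx : t ≠ xzero V n0 hn0) (hy : t ≠ yzero V n0 hn0) :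
    degp n0 G t ≤ 100*(n0*n0) := by
  have hsq : n0 ≤ n0 * n0 := Nat.le_mul_of_pos_left n0 hn0
  cases t with
  | X i =>
    have hi : (i : ℕ) ≠ 0 := by
      intro h0
      exact hx (congrArg GPV.X (Fin.val_injective h0))
    refine le_trans (Finset.card_le_card (nb_X_small n0 G i hi))
      (le_trans Finset.card_image_le ?_)
    simp [Nat.mul_assoc]
  | Y i =>
    have hi : (i : ℕ) ≠ 0 := by
      intro h0
      exact hy (congrArg GPV.Y (Fin.val_injective h0))
    refine le_trans (Finset.card_le_card (nb_Y_small n0 G i hi))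
      (le_trans Finset.card_image_le ?_)
    simp [Nat.mul_assoc]
  | L u i =>
    have cRu : ((Finset.univ : Finset (Fin (10*n0))).image (GPV.R (n0 := n0) u)).card
        ≤ 10*n0 := le_trans Finset.card_image_le (by simp)
    have cLs : ((Finset.univ : Finset V).image (fun v => GPV.L (n0 := n0) v i)).card
        ≤ n0 := le_trans Finset.card_image_le (by simp [hV])
    have c3 : ({xzero V n0 hn0, yzero V n0 hn0, GPV.W} : Finset (GPV V n0)).card ≤ 3 := by
      refine le_trans (Finset.card_insert_le _ _) ?_
      have h2 := Finset.card_insert_le (yzero V n0 hn0) ({GPV.W} : Finset (GPV V n0))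
      simp only [Finset.card_singleton] at h2
      omega
    refine le_trans (Finset.card_le_card (nb_L n0 G hn0 u i))
      (le_trans (card_union3_le _ _ _) ?_)
    omega
  | R u i =>
    have cLu : ((Finset.univ : Finset (Fin (n0+1))).image (GPV.L (n0 := n0) u)).card
        ≤ n0+1 := le_trans Finset.card_image_le (by simp)
    have c2 : ({xzero V n0 hn0, yzero V n0 hn0} : Finset (GPV V n0)).card ≤ 2 := by
      refine le_trans (Finset.card_insert_le _ _) ?_
      simp
    refine le_trans (Finset.card_le_card (nb_R n0 G hn0 u i))
      (le_trans (Finset.card_union_le _ _) ?_)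
    omega
  | W =>
    have cLs : ((Finset.univ : Finset V).image
        (fun v => GPV.L (n0 := n0) v ⟨0, Nat.succ_pos n0⟩)).card ≤ n0 :=
      le_trans Finset.card_image_le (by simp [hV])
    have c2 : ({xzero V n0 hn0, yzero V n0 hn0} : Finset (GPV V n0)).card ≤ 2 := by
      refine le_trans (Finset.card_insert_le _ _) ?_
      simp
    refine le_trans (Finset.card_le_card (nb_W n0 G hn0))
      (le_trans (Finset.card_union_le _ _) ?_)
    omega

end VanishF
end QAOA
namespace QAOA

theorem other_edges_high_coefficients_vanish
    (n0 : ℕ) (hn0 : 0 < n0) {V : Type} [Fintype V] [DecidableEq V]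
    (hV : Fintype.card V = n0) (G : SimpleGraph V) [DecidableRel G.Adj]
    (p : ℕ) (hp : 2 ≤ p) (ψ : ℝ)
    (a b : GPV V n0) (hab : (Gp n0 G).Adj a b)
    (hne : ¬((a = xzero V n0 hn0 ∧ b = yzero V n0 hn0) ∨
             (a = yzero V n0 hn0 ∧ b = xzero V n0 hn0)))
    (k : ℤ)
    (hk : ((p : ℤ) - 1) * (maxCut (Gp n0 G) : ℤ) + 200 * (n0 : ℤ) ^ 2
        + 2 * (n0 : ℤ) * (11 * (n0 : ℤ) + 1) ≤ k) :
    ∑ z ∈ Finset.univ.filter (fun z : GPV V n0 → Fin (2 * p + 1) → ℤˣ =>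
        expnt (Gp n0 G) p z = k),
      coeffTerm p (betaAngles p ψ) a b z = 0 := by
  have hsq : n0 ≤ n0 * n0 := Nat.le_mul_of_pos_left n0 hn0
  have hkey : degp n0 G a + degp n0 G b < 222*(n0*n0) + 2*n0 := by
    by_cases ha : a = xzero V n0 hn0 ∨ a = yzero V n0 hn0
    · have hb1 : b ≠ xzero V n0 hn0 := by
        intro hbe
        rcases ha with ha | ha
        · exact hab.ne (ha.trans hbe.symm)
        · exact hne (Or.inr ⟨ha, hbe⟩)
      have hb2 : b ≠ yzero V n0 hn0 := by
        intro hbe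
        rcases ha with ha | ha
        · exact hne (Or.inl ⟨ha, hbe⟩)
        · exact hab.ne (ha.trans hbe.symm)
      have h1 := degp_le_all n0 G hn0 hV a
      have h2 := degp_le_small n0 G hn0 hV b hb1 hb2
      omega
    · push_neg at ha
      have h1 := degp_le_small n0 G hn0 hV a ha.1 ha.2
      have h2 := degp_le_all n0 G hn0 hV b
      omega
  have hE : ((p:ℤ) - 1) * (maxCut (Gp n0 G) : ℤ)
      + ((degp n0 G a + degp n0 G b : ℕ) : ℤ) < k := by
    have hc : (200*(n0:ℤ)^2 + 2*(n0:ℤ)*(11*(n0:ℤ)+1)) = ((222*(n0*n0) + 2*n0 : ℕ) : ℤ) := by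
      push_cast; ring
    have hlt : ((degp n0 G a + degp n0 G b : ℕ) : ℤ) < ((222*(n0*n0) + 2*n0 : ℕ) : ℤ) :=
      Int.ofNat_lt.mpr hkey
    linarith [hk, hc, hlt]
  exact vanish_general (Gp n0 G) p hp (betaAngles p ψ) a b k
    (degp n0 G a + degp n0 G b)
    (fun u v h => cutz_diff (Gp n0 G) a b u v h) hE

end QAOA
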